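/- arXiv:2003.10474 — 4 statements merged into one kernel-verified Lean document; each statement's English description precedes it below -/
import Mathlib

section
/- Let 0 < α < 1 and 0 < T < ∞. There exists a constant C depending only on α and T such that for all 0 < t < T, ∫₀ᵗ s^{α−1} (T−t+s)^{α−1} ds ≤ C (1 + ω₂(T−t)). -/
open MeasureTheory intervalIntegral Real

/-- `ω₂(t) = 1 + t^(2α−1)/|α(1−2α)|` if `α ≠ 1/2`, and `|ln t|` if `α = 1/2`. -/
noncomputable def omega2 (α t : ℝ) : ℝ :=
  if α = 1 / 2 then |Real.log t| else 1 + t ^ (2 * α - 1) / |α * (1 - 2 * α)|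

private lemma aux_pt1 {α τ : ℝ} (hα1 : α < 1) (hτ : 0 < τ) {s : ℝ} (hs : 0 ≤ s) :
    s ^ (α - 1) * (τ + s) ^ (α - 1) ≤ τ ^ (α - 1) * s ^ (α - 1) := by
  rw [mul_comm (τ ^ (α - 1))]
  refine mul_le_mul_of_nonneg_left ?_ (Real.rpow_nonneg hs _)
  exact Real.rpow_le_rpow_of_nonpos hτ (le_add_of_nonneg_right hs) (by linarith)

private lemma aux_int {α τ : ℝ} (hα : 0 < α) (hα1 : α < 1) (hτ : 0 < τ) {t : ℝ} (ht : 0 ≤ t) :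
    IntervalIntegrable (fun s => s ^ (α - 1) * (τ + s) ^ (α - 1)) volume 0 t := by
  have hg : IntervalIntegrable (fun s : ℝ => τ ^ (α - 1) * s ^ (α - 1)) volume 0 t :=
    (intervalIntegral.intervalIntegrable_rpow' (by linarith)).const_mul _
  clear hg
  refine (intervalIntegral.intervalIntegrable_rpow' (by linarith)).mul_continuousOn ?_
  refine ContinuousOn.rpow_const (by fun_prop) (fun x hx => Or.inl ?_)
  rw [Set.uIcc_of_le ht] at hx
  have := hx.1
  positivity

private lemma aux_rpow_int {α u : ℝ} (hα : 0 < α) :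
    ∫ s in (0 : ℝ)..u, s ^ (α - 1) = u ^ α / α := by
  rw [integral_rpow (Or.inl (by linarith))]
  have h : α - 1 + 1 = α := by ring
  rw [h, Real.zero_rpow hα.ne', sub_zero]

private lemma aux_L2 {α τ u : ℝ} (hα : 0 < α) (hα1 : α < 1) (hτ : 0 < τ) (hu : 0 ≤ u) :
    (∫ s in (0 : ℝ)..u, s ^ (α - 1) * (τ + s) ^ (α - 1)) ≤ τ ^ (α - 1) * u ^ α / α := by
  have hg : IntervalIntegrable (fun s : ℝ => τ ^ (α - 1) * s ^ (α - 1)) volume 0 u :=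
    (intervalIntegral.intervalIntegrable_rpow' (by linarith)).const_mul _
  calc (∫ s in (0 : ℝ)..u, s ^ (α - 1) * (τ + s) ^ (α - 1))
      ≤ ∫ s in (0 : ℝ)..u, τ ^ (α - 1) * s ^ (α - 1) :=
        intervalIntegral.integral_mono_on hu (aux_int hα hα1 hτ hu) hg
          (fun s hs => aux_pt1 hα1 hτ hs.1)
    _ = τ ^ (α - 1) * (u ^ α / α) := by
        rw [intervalIntegral.integral_const_mul, aux_rpow_int hα]
    _ = τ ^ (α - 1) * u ^ α / α := by ring

private lemma aux_contOn {α c : ℝ} {s : Set ℝ} (h : ∀ x ∈ s, (0:ℝ) < c + x) :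
    ContinuousOn (fun x : ℝ => (c + x) ^ (α - 1)) s :=
  ContinuousOn.rpow_const (by fun_prop) (fun x hx => Or.inl (h x hx).ne')

private lemma aux_int2 {α τ t : ℝ} (hτ : 0 < τ) (hτt : τ ≤ t) :
    IntervalIntegrable (fun s => s ^ (α - 1) * (τ + s) ^ (α - 1)) volume τ t := by
  have hpos : ∀ x ∈ Set.uIcc τ t, (0:ℝ) < x := by
    intro x hx
    rw [Set.uIcc_of_le hτt] at hx
    linarith [hx.1]
  refine ContinuousOn.intervalIntegrable ?_
  have h1 : ContinuousOn (fun x : ℝ => x ^ (α - 1)) (Set.uIcc τ t) :=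
    ContinuousOn.rpow_const (by fun_prop) (fun x hx => Or.inl (hpos x hx).ne')
  exact h1.mul (aux_contOn (fun x hx => by linarith [hpos x hx]))

private lemma aux_tail {α τ t : ℝ} (hα : 0 < α) (hα1 : α < 1) (hτ : 0 < τ) (hτt : τ ≤ t) :
    (∫ s in τ..t, s ^ (α - 1) * (τ + s) ^ (α - 1)) ≤ ∫ s in τ..t, s ^ (2 * α - 2) := by
  have hpos : ∀ x ∈ Set.uIcc τ t, (0:ℝ) < x := by
    intro x hx
    rw [Set.uIcc_of_le hτt] at hx
    linarith [hx.1]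
  have hg : IntervalIntegrable (fun s : ℝ => s ^ (2 * α - 2)) volume τ t := by
    refine ContinuousOn.intervalIntegrable ?_
    exact ContinuousOn.rpow_const (by fun_prop) (fun x hx => Or.inl (hpos x hx).ne')
  refine intervalIntegral.integral_mono_on hτt (aux_int2 hτ hτt) hg ?_
  intro s hs
  have hs0 : 0 < s := by linarith [hs.1]
  have h1 : (τ + s) ^ (α - 1) ≤ s ^ (α - 1) :=
    Real.rpow_le_rpow_of_nonpos hs0 (by linarith) (by linarith)
  calc s ^ (α - 1) * (τ + s) ^ (α - 1) ≤ s ^ (α - 1) * s ^ (α - 1) :=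
        mul_le_mul_of_nonneg_left h1 (Real.rpow_nonneg hs0.le _)
    _ = s ^ (2 * α - 2) := by
        rw [← Real.rpow_add hs0]; congr 1; ring

set_option maxHeartbeats 1000000 in
/-- Convolution-kernel integral estimate:
`∫₀ᵗ s^(α−1) (T−t+s)^(α−1) ds ≤ C (1 + ω₂(T−t))` for all `0 < t < T`. -/
theorem convolution_kernel_integral_omega2
    (α T : ℝ) (hα : 0 < α) (hα1 : α < 1) (hT : 0 < T) :
    ∃ C > (0 : ℝ), ∀ t ∈ Set.Ioo (0 : ℝ) T,
      (∫ s in (0 : ℝ)..t, s ^ (α - 1) * (T - t + s) ^ (α - 1))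
        ≤ C * (1 + omega2 α (T - t)) := by
  by_cases hhalf : α = 1 / 2
  · -- ============ Case α = 1/2 ============
    subst hhalf
    refine ⟨3 + |Real.log T|, by positivity, ?_⟩
    rintro t ⟨ht0, htT⟩
    set τ := T - t with hτdef
    have hτ0 : 0 < τ := by simp only [hτdef]; linarith
    have hω : omega2 (1/2) τ = |Real.log τ| := by simp [omega2]
    rw [hω]
    have hlogτ : 0 ≤ |Real.log τ| := abs_nonneg _
    have hlogT : 0 ≤ |Real.log T| := abs_nonneg _
    have hττ : τ ^ ((1:ℝ)/2 - 1) * τ ^ ((1:ℝ)/2) = 1 := by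
      rw [← Real.rpow_add hτ0]; norm_num
    have hI1 : (∫ s in (0:ℝ)..τ, s ^ ((1:ℝ)/2 - 1) * (τ + s) ^ ((1:ℝ)/2 - 1)) ≤ 2 := by
      calc (∫ s in (0:ℝ)..τ, s ^ ((1:ℝ)/2 - 1) * (τ + s) ^ ((1:ℝ)/2 - 1))
          ≤ τ ^ ((1:ℝ)/2 - 1) * τ ^ ((1:ℝ)/2) / ((1:ℝ)/2) :=
            aux_L2 (by norm_num) (by norm_num) hτ0 hτ0.le
        _ = 2 := by rw [hττ]; norm_num
    by_cases hcase : t ≤ τ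
    · have h1 : (∫ s in (0:ℝ)..t, s ^ ((1:ℝ)/2 - 1) * (τ + s) ^ ((1:ℝ)/2 - 1))
          ≤ τ ^ ((1:ℝ)/2 - 1) * t ^ ((1:ℝ)/2) / ((1:ℝ)/2) :=
        aux_L2 (by norm_num) (by norm_num) hτ0 ht0.le
      have h2 : t ^ ((1:ℝ)/2) ≤ τ ^ ((1:ℝ)/2) :=
        Real.rpow_le_rpow ht0.le hcase (by norm_num)
      have h3 : τ ^ ((1:ℝ)/2 - 1) * t ^ ((1:ℝ)/2) ≤ 1 := by
        calc τ ^ ((1:ℝ)/2 - 1) * t ^ ((1:ℝ)/2) ≤ τ ^ ((1:ℝ)/2 - 1) * τ ^ ((1:ℝ)/2) :=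
              mul_le_mul_of_nonneg_left h2 (Real.rpow_nonneg hτ0.le _)
          _ = 1 := hττ
      linarith [h1, h3, mul_nonneg hlogT hlogτ]
    · push_neg at hcase
      have hsplit : (∫ s in (0:ℝ)..t, s ^ ((1:ℝ)/2 - 1) * (τ + s) ^ ((1:ℝ)/2 - 1))
          = (∫ s in (0:ℝ)..τ, s ^ ((1:ℝ)/2 - 1) * (τ + s) ^ ((1:ℝ)/2 - 1))
            + ∫ s in τ..t, s ^ ((1:ℝ)/2 - 1) * (τ + s) ^ ((1:ℝ)/2 - 1) :=
        (intervalIntegral.integral_add_adjacent_intervals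
          (aux_int (by norm_num) (by norm_num) hτ0 hτ0.le)
          (aux_int2 hτ0 hcase.le)).symm
      have hI2 : (∫ s in τ..t, s ^ ((1:ℝ)/2 - 1) * (τ + s) ^ ((1:ℝ)/2 - 1))
          ≤ Real.log t - Real.log τ := by
        have h1 := aux_tail (α := 1/2) (by norm_num) (by norm_num) hτ0 hcase.le
        have he : (2 * ((1:ℝ)/2) - 2) = -1 := by norm_num
        rw [he] at h1
        have h2 : (∫ s in τ..t, s ^ (-1:ℝ)) = Real.log t - Real.log τ := by
          simp only [Real.rpow_neg_one]
          rw [integral_inv_of_pos hτ0 (by linarith : (0:ℝ) < t),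
            Real.log_div (by linarith) hτ0.ne']
        linarith [h1, h2.le, h2.ge]
      have hlt : Real.log t ≤ |Real.log T| :=
        le_trans (Real.log_le_log ht0 htT.le) (le_abs_self _)
      have hlτ : -Real.log τ ≤ |Real.log τ| := neg_le_abs _
      rw [hsplit]
      linarith [hI1, hI2, hlt, hlτ, mul_nonneg hlogT hlogτ]
  · -- ============ Case α ≠ 1/2 ============
    have h2α : 2 * α - 1 ≠ 0 := fun h => hhalf (by linarith)
    have hd : 0 < |α * (1 - 2 * α)| := by
      rw [abs_pos]
      intro h
      rcases mul_eq_zero.mp h with h' | h'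
      · exact hα.ne' h'
      · exact h2α (by linarith)
    set d := |α * (1 - 2 * α)| with hddef
    have hab : 0 < |2 * α - 1| := abs_pos.mpr h2α
    have hK : 0 ≤ T ^ (2 * α - 1) := Real.rpow_nonneg hT.le _
    refine ⟨d / α + (T ^ (2 * α - 1) + d) / |2 * α - 1| + 1, by positivity, ?_⟩
    rintro t ⟨ht0, htT⟩
    set τ := T - t with hτdef
    have hτ0 : 0 < τ := by simp only [hτdef]; linarith
    have hω : omega2 α τ = 1 + τ ^ (2 * α - 1) / d := by
      rw [omega2, if_neg hhalf]
    rw [hω]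
    set A := τ ^ (2 * α - 1) with hAdef
    have hA0 : 0 ≤ A := Real.rpow_nonneg hτ0.le _
    set W := 1 + (1 + A / d) with hWdef
    have hW2 : 2 ≤ W := by
      have : 0 ≤ A / d := div_nonneg hA0 hd.le
      simp only [hWdef]; linarith
    have hW0 : 0 ≤ W := by linarith
    have hAd : A ≤ d * W := by
      have h1 : d * W = 2 * d + A := by
        simp only [hWdef]
        field_simp
        ring
      linarith [hd.le, h1.ge, h1.le, hd]
    have hττ : τ ^ (α - 1) * τ ^ α = A := by
      rw [hAdef, ← Real.rpow_add hτ0]; congr 1; ring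
    clear_value A W
    by_cases hcase : t ≤ τ
    · -- early case : whole integral ≤ A / α
      have h1 : (∫ s in (0:ℝ)..t, s ^ (α - 1) * (τ + s) ^ (α - 1))
          ≤ τ ^ (α - 1) * t ^ α / α := aux_L2 hα hα1 hτ0 ht0.le
      have h2 : τ ^ (α - 1) * t ^ α ≤ A := by
        calc τ ^ (α - 1) * t ^ α ≤ τ ^ (α - 1) * τ ^ α :=
              mul_le_mul_of_nonneg_left (Real.rpow_le_rpow ht0.le hcase hα.le)
                (Real.rpow_nonneg hτ0.le _)
          _ = A := hττ
      have h3 : (∫ s in (0:ℝ)..t, s ^ (α - 1) * (τ + s) ^ (α - 1)) ≤ d * W / α := by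
        calc (∫ s in (0:ℝ)..t, s ^ (α - 1) * (τ + s) ^ (α - 1))
            ≤ τ ^ (α - 1) * t ^ α / α := h1
          _ ≤ A / α := by gcongr
          _ ≤ d * W / α := by gcongr
      calc (∫ s in (0:ℝ)..t, s ^ (α - 1) * (τ + s) ^ (α - 1)) ≤ d * W / α := h3
        _ = d / α * W := by ring
        _ ≤ (d / α + (T ^ (2 * α - 1) + d) / |2 * α - 1| + 1) * W := by
            have h4 : 0 ≤ (T ^ (2 * α - 1) + d) / |2 * α - 1| + 1 := by positivity
            nlinarith [mul_nonneg h4 hW0]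
    · push_neg at hcase
      have hsplit : (∫ s in (0:ℝ)..t, s ^ (α - 1) * (τ + s) ^ (α - 1))
          = (∫ s in (0:ℝ)..τ, s ^ (α - 1) * (τ + s) ^ (α - 1))
            + ∫ s in τ..t, s ^ (α - 1) * (τ + s) ^ (α - 1) :=
        (intervalIntegral.integral_add_adjacent_intervals
          (aux_int hα hα1 hτ0 hτ0.le) (aux_int2 hτ0 hcase.le)).symm
      have hI1 : (∫ s in (0:ℝ)..τ, s ^ (α - 1) * (τ + s) ^ (α - 1)) ≤ A / α := by
        calc (∫ s in (0:ℝ)..τ, s ^ (α - 1) * (τ + s) ^ (α - 1))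
            ≤ τ ^ (α - 1) * τ ^ α / α := aux_L2 hα hα1 hτ0 hτ0.le
          _ = A / α := by rw [hττ]
      set B := t ^ (2 * α - 1) with hBdef
      have hB0 : 0 ≤ B := Real.rpow_nonneg ht0.le _
      clear_value B
      have hI2 : (∫ s in τ..t, s ^ (α - 1) * (τ + s) ^ (α - 1))
          ≤ (B - A) / (2 * α - 1) := by
        have h1 := aux_tail hα hα1 hτ0 hcase.le
        have h2 : (∫ s in τ..t, s ^ (2 * α - 2)) = (B - A) / (2 * α - 1) := by
          rw [integral_rpow (Or.inr ⟨by intro h; exact h2α (by linarith), by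
            rw [Set.uIcc_of_le hcase.le]
            simp only [Set.mem_Icc, not_and, not_le]
            intro h; linarith⟩)]
          have he : 2 * α - 2 + 1 = 2 * α - 1 := by ring
          rw [he, hBdef, hAdef]
        linarith [h1, h2.le, h2.ge]
      rw [hsplit]
      rcases lt_or_gt_of_ne (fun h : α = 1/2 => hhalf h) with hlt | hgt
      · -- α < 1/2 : 2α - 1 < 0
        have hG : 0 < 1 - 2 * α := by linarith
        have habs : |2 * α - 1| = 1 - 2 * α := by
          rw [abs_of_neg (by linarith)]; ring
        rw [habs]
        have hflip : (B - A) / (2 * α - 1) = (A - B) / (1 - 2 * α) := by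
          rw [div_eq_div_iff (by linarith) (by linarith)]; ring
        have hI2' : (∫ s in τ..t, s ^ (α - 1) * (τ + s) ^ (α - 1))
            ≤ d * W / (1 - 2 * α) := by
          calc (∫ s in τ..t, s ^ (α - 1) * (τ + s) ^ (α - 1))
              ≤ (A - B) / (1 - 2 * α) := by rw [← hflip]; exact hI2
            _ ≤ (d * W) / (1 - 2 * α) := by gcongr <;> linarith
        have hI1' : (∫ s in (0:ℝ)..τ, s ^ (α - 1) * (τ + s) ^ (α - 1)) ≤ d * W / α :=
          le_trans hI1 (by gcongr)
        have hexp : (T ^ (2 * α - 1) + d) / (1 - 2 * α)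
            = T ^ (2 * α - 1) / (1 - 2 * α) + d / (1 - 2 * α) := by ring
        have hKG : 0 ≤ T ^ (2 * α - 1) / (1 - 2 * α) := by positivity
        calc (∫ s in (0:ℝ)..τ, s ^ (α - 1) * (τ + s) ^ (α - 1))
              + (∫ s in τ..t, s ^ (α - 1) * (τ + s) ^ (α - 1))
            ≤ d * W / α + d * W / (1 - 2 * α) := add_le_add hI1' hI2'
          _ = d / α * W + d / (1 - 2 * α) * W := by ring
          _ ≤ (d / α + (T ^ (2 * α - 1) + d) / (1 - 2 * α) + 1) * W := by
              rw [hexp]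
              nlinarith [mul_nonneg hKG hW0, hW0, hW2]
      · -- α > 1/2 : 2α - 1 > 0
        have hG : 0 < 2 * α - 1 := by linarith
        have habs : |2 * α - 1| = 2 * α - 1 := abs_of_pos hG
        rw [habs]
        have hBK : B ≤ T ^ (2 * α - 1) := by
          rw [hBdef]; exact Real.rpow_le_rpow ht0.le htT.le hG.le
        have hI2' : (∫ s in τ..t, s ^ (α - 1) * (τ + s) ^ (α - 1))
            ≤ T ^ (2 * α - 1) / (2 * α - 1) := by
          calc (∫ s in τ..t, s ^ (α - 1) * (τ + s) ^ (α - 1))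
              ≤ (B - A) / (2 * α - 1) := hI2
            _ ≤ T ^ (2 * α - 1) / (2 * α - 1) := by gcongr <;> linarith
        have hI1' : (∫ s in (0:ℝ)..τ, s ^ (α - 1) * (τ + s) ^ (α - 1)) ≤ d * W / α :=
          le_trans hI1 (by gcongr)
        have hexp : (T ^ (2 * α - 1) + d) / (2 * α - 1)
            = T ^ (2 * α - 1) / (2 * α - 1) + d / (2 * α - 1) := by ring
        have hKG : 0 ≤ T ^ (2 * α - 1) / (2 * α - 1) := by positivity
        have hdG : 0 ≤ d / (2 * α - 1) := by positivity
        calc (∫ s in (0:ℝ)..τ, s ^ (α - 1) * (τ + s) ^ (α - 1))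
              + (∫ s in τ..t, s ^ (α - 1) * (τ + s) ^ (α - 1))
            ≤ d * W / α + T ^ (2 * α - 1) / (2 * α - 1) := add_le_add hI1' hI2'
          _ = d / α * W + T ^ (2 * α - 1) / (2 * α - 1) := by ring
          _ ≤ (d / α + (T ^ (2 * α - 1) + d) / (2 * α - 1) + 1) * W := by
              rw [hexp]
              nlinarith [mul_nonneg hKG hW0, mul_nonneg hdG hW0, hW0, hW2, hKG]
end

section
/- Let 0 < α < 1, σ ≥ 1 and T > 0. There exists a constant C depending only on α, σ and T such that for every integer M ≥ 2, setting t_j := (j/M)^σ · T/2 for 0 ≤ j ≤ M, one has ∑_{j=2}^{M} (t_j − t_{j−1})^{3−α} ≤ C M^{α−2}. -/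
open Real Finset

lemma graded_aux_mono (σ : ℝ) (hσ : 1 ≤ σ) :
    MonotoneOn (fun x : ℝ => σ * x - x ^ σ) (Set.Icc 0 1) := by
  have hdiff : ∀ x : ℝ, HasDerivAt (fun x : ℝ => σ * x - x ^ σ)
      (σ - σ * x ^ (σ - 1)) x := by
    intro x
    have h1 : HasDerivAt (fun x : ℝ => x ^ σ) (σ * x ^ (σ - 1)) x :=
      Real.hasDerivAt_rpow_const (Or.inr hσ)
    exact (((hasDerivAt_id x).const_mul σ).sub h1).congr_deriv (by ring)
  apply monotoneOn_of_deriv_nonneg (convex_Icc 0 1)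
  · exact fun x _ => ((hdiff x).continuousAt).continuousWithinAt
  · intro x _
    exact ((hdiff x).differentiableAt).differentiableWithinAt
  · intro x hx
    rw [interior_Icc] at hx
    rw [(hdiff x).deriv]
    have hx1 : x ^ (σ - 1) ≤ 1 :=
      Real.rpow_le_one hx.1.le hx.2.le (by linarith)
    nlinarith [hσ, hx1]

/-- `a^σ - b^σ ≤ σ (a - b)` for `0 ≤ b ≤ a ≤ 1`, `σ ≥ 1`. -/
lemma graded_aux_sub (σ a b : ℝ) (hσ : 1 ≤ σ) (hb : 0 ≤ b) (hba : b ≤ a) (ha : a ≤ 1) :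
    a ^ σ - b ^ σ ≤ σ * (a - b) := by
  have := graded_aux_mono σ hσ ⟨hb, hba.trans ha⟩ ⟨hb.trans hba, ha⟩ hba
  simp only at this
  linarith

/-- Graded-mesh summation estimate: with `t_j = (j/M)^σ T/2`,
`∑_{j=2}^M (t_j − t_{j−1})^(3−α) ≤ C M^(α−2)`. -/
theorem graded_mesh_sum_estimate
    (α σ T : ℝ) (hα : 0 < α) (hα1 : α < 1) (hσ : 1 ≤ σ) (hT : 0 < T) :
    ∃ C > (0 : ℝ), ∀ M : ℕ, 2 ≤ M →
      (∑ j ∈ Finset.Icc 2 M,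
        (((j : ℝ) / (M : ℝ)) ^ σ * (T / 2) - (((j : ℝ) - 1) / (M : ℝ)) ^ σ * (T / 2))
          ^ (3 - α))
        ≤ C * (M : ℝ) ^ (α - 2) := by
  have hσ0 : 0 < σ := lt_of_lt_of_le one_pos hσ
  have hC0 : (0 : ℝ) < σ * (T / 2) := by positivity
  refine ⟨(σ * (T / 2)) ^ (3 - α), Real.rpow_pos_of_pos hC0 _, ?_⟩
  intro M hM
  have hM0 : (0 : ℝ) < M := by positivity
  have h3α : (0 : ℝ) ≤ 3 - α := by linarith
  have hterm : ∀ j ∈ Finset.Icc 2 M,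
      (((j : ℝ) / (M : ℝ)) ^ σ * (T / 2) - (((j : ℝ) - 1) / (M : ℝ)) ^ σ * (T / 2))
        ^ (3 - α) ≤ (σ * (T / 2) / M) ^ (3 - α) := by
    intro j hj
    simp only [Finset.mem_Icc] at hj
    have hj2 : (2 : ℝ) ≤ (j : ℝ) := by exact_mod_cast hj.1
    have hjM : (j : ℝ) ≤ (M : ℝ) := by exact_mod_cast hj.2
    set a := (j : ℝ) / (M : ℝ) with ha_def
    set b := ((j : ℝ) - 1) / (M : ℝ) with hb_def
    have hb0 : 0 ≤ b := by
      apply div_nonneg (by linarith) hM0.le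
    have hba : b ≤ a := by
      rw [ha_def, hb_def]; gcongr; linarith
    have ha1 : a ≤ 1 := by
      rw [ha_def, div_le_one hM0]; exact hjM
    have hsub : a ^ σ - b ^ σ ≤ σ * (a - b) := graded_aux_sub σ a b hσ hb0 hba ha1
    have hab : a - b = 1 / M := by
      rw [ha_def, hb_def, div_sub_div_same]; ring_nf
    have hkey : a ^ σ * (T / 2) - b ^ σ * (T / 2) ≤ σ * (T / 2) / M := by
      have : a ^ σ - b ^ σ ≤ σ / M := by
        rw [hab] at hsub
        calc a ^ σ - b ^ σ ≤ σ * (1 / M) := hsub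
          _ = σ / M := by ring
      calc a ^ σ * (T / 2) - b ^ σ * (T / 2) = (a ^ σ - b ^ σ) * (T / 2) := by ring
        _ ≤ (σ / M) * (T / 2) := by
            apply mul_le_mul_of_nonneg_right this (by positivity)
        _ = σ * (T / 2) / M := by ring
    apply Real.rpow_le_rpow _ hkey h3α
    have : b ^ σ ≤ a ^ σ := Real.rpow_le_rpow hb0 hba hσ0.le
    nlinarith [hT]
  calc (∑ j ∈ Finset.Icc 2 M,
        (((j : ℝ) / (M : ℝ)) ^ σ * (T / 2) - (((j : ℝ) - 1) / (M : ℝ)) ^ σ * (T / 2))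
          ^ (3 - α))
      ≤ ∑ _j ∈ Finset.Icc 2 M, (σ * (T / 2) / M) ^ (3 - α) :=
        Finset.sum_le_sum hterm
    _ = ((M + 1 - 2 : ℕ) : ℝ) * (σ * (T / 2) / M) ^ (3 - α) := by
        rw [Finset.sum_const, Nat.card_Icc, nsmul_eq_mul]
    _ ≤ (M : ℝ) * (σ * (T / 2) / M) ^ (3 - α) := by
        apply mul_le_mul_of_nonneg_right _ (Real.rpow_nonneg (by positivity) _)
        exact_mod_cast (by omega : M + 1 - 2 ≤ M)
    _ = (σ * (T / 2)) ^ (3 - α) * (M : ℝ) ^ (α - 2) := by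
        rw [Real.div_rpow hC0.le hM0.le]
        have h : (M : ℝ) ^ (α - 2) * (M : ℝ) ^ (3 - α) = M := by
          rw [← Real.rpow_add hM0]
          norm_num
        have hne : (M : ℝ) ^ (3 - α) ≠ 0 := (Real.rpow_pos_of_pos hM0 _).ne'
        calc (M : ℝ) * ((σ * (T / 2)) ^ (3 - α) / (M : ℝ) ^ (3 - α))
            = (σ * (T / 2)) ^ (3 - α) * ((M : ℝ) / (M : ℝ) ^ (3 - α)) := by ring
          _ = (σ * (T / 2)) ^ (3 - α) * (M : ℝ) ^ (α - 2) := by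
              congr 1
              rw [div_eq_iff hne]
              exact h.symm
end

section
/- Let 0 < α < 1, 0 < r < min{1/2, (1−α)/α}, T > 0, and let σ be a real number with σ > max{1, (2−α)/((2r−1)α+1)}. There exists a constant C depending only on α, r, σ and T such that for every integer M ≥ 2, setting t_j := (j/M)^σ · T/2 for 0 ≤ j ≤ M, one has ∑_{j=2}^{M} t_{j−1}^{2(αr+α−1)} (t_j − t_{j−1})^{3−α} ≤ C M^{α−2}. -/
set_option maxHeartbeats 1000000

/-- Pointwise Bernoulli-type bound: for `0 < γ ≤ 1` and `x ≥ 1`,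
`γ * x^(γ-1) ≤ x^γ - (x-1)^γ`. -/
lemma aux_bern_step {γ x : ℝ} (hγ0 : 0 < γ) (hγ1 : γ ≤ 1) (hx : 1 ≤ x) :
    γ * x ^ (γ - 1) ≤ x ^ γ - (x - 1) ^ γ := by
  have hx0 : 0 < x := lt_of_lt_of_le one_pos hx
  have h1x : 1 / x ≤ 1 := by rw [div_le_one hx0]; exact hx
  have hs : (-1 : ℝ) ≤ -(1 / x) := by linarith
  have hber : (1 + -(1 / x)) ^ γ ≤ 1 + γ * -(1 / x) :=
    rpow_one_add_le_one_add_mul_self hs hγ0.le hγ1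
  have hy : x - 1 = x * (1 + -(1 / x)) := by field_simp; ring
  have h1x0 : (0 : ℝ) ≤ 1 + -(1 / x) := by
    have h0 : 0 < 1 / x := by positivity
    linarith
  have h2 : (x - 1) ^ γ = x ^ γ * (1 + -(1 / x)) ^ γ := by
    rw [hy, Real.mul_rpow hx0.le h1x0]
  have h3 : x ^ γ * (1 + -(1 / x)) ^ γ ≤ x ^ γ * (1 + γ * -(1 / x)) :=
    mul_le_mul_of_nonneg_left hber (Real.rpow_nonneg hx0.le γ)
  have h4 : x ^ γ * (1 + γ * -(1 / x)) = x ^ γ - γ * (x ^ γ / x) := by ring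
  have h5 : x ^ γ / x = x ^ (γ - 1) := by
    rw [Real.rpow_sub hx0, Real.rpow_one]
  rw [h4, h5] at h3
  linarith [h2, h3]

/-- Telescoping sum bound: for `0 < γ ≤ 1` and `M ≥ 2`,
`∑_{j=2}^M j^(γ-1) ≤ M^γ / γ`. -/
lemma aux_tele_sum {γ : ℝ} (hγ0 : 0 < γ) (hγ1 : γ ≤ 1) :
    ∀ M : ℕ, 2 ≤ M → ∑ j ∈ Finset.Icc 2 M, (j : ℝ) ^ (γ - 1) ≤ (M : ℝ) ^ γ / γ := by
  intro M hM
  induction M, hM using Nat.le_induction with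
  | base =>
      rw [Finset.Icc_self, Finset.sum_singleton]
      have h := aux_bern_step hγ0 hγ1 (by norm_num : (1:ℝ) ≤ 2)
      have h1 : (0:ℝ) ≤ ((2:ℝ) - 1) ^ γ := Real.rpow_nonneg (by norm_num) γ
      rw [le_div_iff₀ hγ0]
      push_cast
      nlinarith
  | succ n hn ih =>
      rw [← Finset.insert_Icc_right_eq_Icc_add_one (by omega : 2 ≤ n + 1),
        Finset.sum_insert (by simp)]
      have hx : (1 : ℝ) ≤ (n : ℝ) + 1 := by
        have h0 : (1:ℝ) ≤ (n:ℝ) := by exact_mod_cast Nat.one_le_of_lt hn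
        linarith
      have h := aux_bern_step hγ0 hγ1 hx
      have hsub : ((n : ℝ) + 1) - 1 = (n : ℝ) := by ring
      rw [hsub] at h
      have hle : ((n:ℝ) + 1) ^ (γ - 1) ≤ (((n:ℝ)+1) ^ γ - (n:ℝ) ^ γ) / γ := by
        rw [le_div_iff₀ hγ0]; nlinarith
      push_cast
      calc ((n:ℝ) + 1) ^ (γ - 1) + ∑ j ∈ Finset.Icc 2 n, (j : ℝ) ^ (γ - 1)
          ≤ (((n:ℝ)+1) ^ γ - (n:ℝ) ^ γ) / γ + (n : ℝ) ^ γ / γ := add_le_add hle ih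
        _ = ((n:ℝ)+1) ^ γ / γ := by ring

/-- Weighted graded-mesh summation estimate: with `t_j = (j/M)^σ T/2`,
`0 < r < min{1/2, (1−α)/α}` and `σ > max{1, (2−α)/((2r−1)α+1)}`,
`∑_{j=2}^M t_{j−1}^(2(αr+α−1)) (t_j − t_{j−1})^(3−α) ≤ C M^(α−2)`. -/
theorem weighted_graded_mesh_sum_estimate
    (α r σ T : ℝ) (hα : 0 < α) (hα1 : α < 1)
    (hr : 0 < r) (hr2 : r < min (1 / 2) ((1 - α) / α))
    (hσ : max 1 ((2 - α) / ((2 * r - 1) * α + 1)) < σ) (hT : 0 < T) :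
    ∃ C > (0 : ℝ), ∀ M : ℕ, 2 ≤ M →
      (∑ j ∈ Finset.Icc 2 M,
        ((((j : ℝ) - 1) / (M : ℝ)) ^ σ * (T / 2)) ^ (2 * (α * r + α - 1)) *
          (((j : ℝ) / (M : ℝ)) ^ σ * (T / 2) - (((j : ℝ) - 1) / (M : ℝ)) ^ σ * (T / 2))
            ^ (3 - α))
        ≤ C * (M : ℝ) ^ (α - 2) := by
  have hσ1 : 1 < σ := lt_of_le_of_lt (le_max_left _ _) hσ
  have hσ0 : 0 < σ := by linarith
  have hra : r < (1 - α) / α := lt_of_lt_of_le hr2 (min_le_right _ _)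
  have hra' : α * r < 1 - α := by
    have h := (lt_div_iff₀ hα).mp hra
    linarith
  set a : ℝ := 2 * (α * r + α - 1) with hadef
  set b : ℝ := 3 - α with hbdef
  have ha0 : a < 0 := by rw [hadef]; nlinarith
  have hb0 : 0 < b := by rw [hbdef]; linarith
  have hden : 0 < (2 * r - 1) * α + 1 := by nlinarith
  have hσ2 : (2 - α) / ((2 * r - 1) * α + 1) < σ := lt_of_le_of_lt (le_max_right _ _) hσ
  have hkey : 2 - α < σ * ((2 * r - 1) * α + 1) := by
    rw [div_lt_iff₀ hden] at hσ2; linarith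
  set e : ℝ := σ * (a + b) - b with hedef
  have he1 : -1 < e := by
    have hsplit : σ * (a + b) = σ * ((2 * r - 1) * α + 1) + 2 * (α * σ) := by
      rw [hadef, hbdef]; ring
    have hpos : 0 < α * σ := mul_pos hα hσ0
    rw [hedef, hbdef]
    rw [hbdef] at hsplit
    linarith
  set γ : ℝ := min e 0 + 1 with hγdef
  have hγ0 : 0 < γ := by
    rcases le_or_gt e 0 with h | h
    · rw [hγdef, min_eq_left h]; linarith
    · rw [hγdef, min_eq_right h.le]; norm_num
  have hγ1 : γ ≤ 1 := by
    have h := min_le_right e 0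
    rw [hγdef]; linarith
  set c : ℝ := T / 2 with hcdef
  have hc0 : 0 < c := by rw [hcdef]; linarith
  set K : ℝ := c ^ a * c ^ b * (2 : ℝ) ^ (-(σ * a)) * σ ^ b with hKdef
  have hK0 : 0 < K := by
    rw [hKdef]
    have h1 := Real.rpow_pos_of_pos hc0 a
    have h2 := Real.rpow_pos_of_pos hc0 b
    have h3 := Real.rpow_pos_of_pos (by norm_num : (0:ℝ) < 2) (-(σ * a))
    have h4 := Real.rpow_pos_of_pos hσ0 b
    positivity
  refine ⟨K / γ, by positivity, ?_⟩
  intro M hM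
  have hM0 : (0 : ℝ) < (M : ℝ) := by
    have h : (2 : ℝ) ≤ (M : ℝ) := by exact_mod_cast hM
    linarith
  have hterm : ∀ j ∈ Finset.Icc 2 M,
      ((((j : ℝ) - 1) / (M : ℝ)) ^ σ * c) ^ a *
          (((j : ℝ) / (M : ℝ)) ^ σ * c - (((j : ℝ) - 1) / (M : ℝ)) ^ σ * c) ^ b
        ≤ K * (M : ℝ) ^ (-b) * ((j : ℝ) / (M : ℝ)) ^ (γ - 1) := by
    intro j hj
    obtain ⟨hj2, hjM⟩ := Finset.mem_Icc.mp hj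
    have hjr2 : (2 : ℝ) ≤ (j : ℝ) := by exact_mod_cast hj2
    have hjrM : (j : ℝ) ≤ (M : ℝ) := by exact_mod_cast hjM
    have hjr0 : (0 : ℝ) < (j : ℝ) := by linarith
    set x : ℝ := (j : ℝ) / (M : ℝ) with hxdef
    set y : ℝ := ((j : ℝ) - 1) / (M : ℝ) with hydef
    have hx0 : 0 < x := by rw [hxdef]; positivity
    have hx1 : x ≤ 1 := by rw [hxdef, div_le_one hM0]; exact hjrM
    have hy0 : 0 < y := by
      rw [hydef]
      have h1 : (0:ℝ) < (j:ℝ) - 1 := by linarith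
      positivity
    have hyx : y ≤ x := by
      rw [hxdef, hydef, div_le_div_iff₀ hM0 hM0]
      nlinarith
    have hy2 : x / 2 ≤ y := by
      rw [hxdef, hydef, div_div, div_le_div_iff₀ (by positivity) hM0]
      nlinarith
    have hσa : σ * a ≤ 0 := le_of_lt (mul_neg_of_pos_of_neg hσ0 ha0)
    have hD0 : (0:ℝ) ≤ x ^ σ - y ^ σ :=
      sub_nonneg.mpr (Real.rpow_le_rpow hy0.le hyx hσ0.le)
    have t1 : (y ^ σ * c) ^ a = c ^ a * y ^ (σ * a) := by
      rw [Real.mul_rpow (Real.rpow_nonneg hy0.le σ) hc0.le, ← Real.rpow_mul hy0.le, mul_comm]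
    have t2 : x ^ σ * c - y ^ σ * c = (x ^ σ - y ^ σ) * c := by ring
    have t3 : ((x ^ σ - y ^ σ) * c) ^ b = c ^ b * (x ^ σ - y ^ σ) ^ b := by
      rw [Real.mul_rpow hD0 hc0.le, mul_comm]
    have hB1 : y ^ (σ * a) ≤ (2:ℝ) ^ (-(σ * a)) * x ^ (σ * a) := by
      have h1 : y ^ (σ * a) ≤ (x / 2) ^ (σ * a) :=
        Real.rpow_le_rpow_of_nonpos (by positivity) hy2 hσa
      rw [Real.div_rpow hx0.le (by norm_num)] at h1
      rw [Real.rpow_neg (by norm_num : (0:ℝ) ≤ 2)]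
      calc y ^ (σ*a) ≤ x ^ (σ*a) / (2:ℝ) ^ (σ*a) := h1
        _ = ((2:ℝ) ^ (σ*a))⁻¹ * x ^ (σ*a) := by ring
    have hyeq : y = x * (1 + -(1 / (j:ℝ))) := by
      rw [hxdef, hydef]
      field_simp
      ring
    have h1j : (0:ℝ) ≤ 1 + -(1/(j:ℝ)) := by
      have h : 1/(j:ℝ) ≤ 1 := by rw [div_le_one hjr0]; linarith
      linarith
    have hber : 1 + σ * -(1/(j:ℝ)) ≤ (1 + -(1/(j:ℝ))) ^ σ := by
      refine one_add_mul_self_le_rpow_one_add ?_ hσ1.le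
      have h : 1/(j:ℝ) ≤ 1 := by rw [div_le_one hjr0]; linarith
      linarith
    have hD : x ^ σ - y ^ σ ≤ x ^ σ * (σ / (j:ℝ)) := by
      have hys : y ^ σ = x ^ σ * (1 + -(1/(j:ℝ))) ^ σ := by
        rw [hyeq, Real.mul_rpow hx0.le h1j]
      have hxσ : (0:ℝ) ≤ x ^ σ := Real.rpow_nonneg hx0.le σ
      have h := mul_le_mul_of_nonneg_left hber hxσ
      rw [← hys] at h
      have hexp : x ^ σ * (1 + σ * -(1/(j:ℝ))) = x ^ σ - x ^ σ * (σ / (j:ℝ)) := by ring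
      rw [hexp] at h
      linarith
    have hDb : (x ^ σ - y ^ σ) ^ b ≤ σ ^ b * x ^ (σ * b) * ((j:ℝ)) ^ (-b) := by
      have h1 : (x ^ σ - y ^ σ) ^ b ≤ (x ^ σ * (σ / (j:ℝ))) ^ b :=
        Real.rpow_le_rpow hD0 hD hb0.le
      have h2 : (x ^ σ * (σ / (j:ℝ))) ^ b = x ^ (σ*b) * (σ ^ b / (j:ℝ) ^ b) := by
        rw [Real.mul_rpow (Real.rpow_nonneg hx0.le σ) (by positivity),
            ← Real.rpow_mul hx0.le, Real.div_rpow hσ0.le hjr0.le]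
      rw [Real.rpow_neg hjr0.le]
      calc (x ^ σ - y ^ σ) ^ b ≤ (x ^ σ * (σ / (j:ℝ))) ^ b := h1
        _ = σ ^ b * x ^ (σ*b) * ((j:ℝ) ^ b)⁻¹ := by rw [h2]; ring
    have hcomb : (y ^ σ * c) ^ a * (x ^ σ * c - y ^ σ * c) ^ b
        ≤ (c ^ a * ((2:ℝ) ^ (-(σ*a)) * x ^ (σ*a))) *
            (c ^ b * (σ ^ b * x ^ (σ*b) * (j:ℝ) ^ (-b))) := by
      rw [t1, t2, t3]
      have hca : (0:ℝ) ≤ c ^ a := (Real.rpow_pos_of_pos hc0 a).le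
      have hcb : (0:ℝ) ≤ c ^ b := (Real.rpow_pos_of_pos hc0 b).le
      have hya : (0:ℝ) ≤ y ^ (σ*a) := Real.rpow_nonneg hy0.le _
      have hDbnn : (0:ℝ) ≤ (x ^ σ - y ^ σ) ^ b := Real.rpow_nonneg hD0 _
      have h2nn : (0:ℝ) ≤ (2:ℝ) ^ (-(σ*a)) * x ^ (σ*a) := by positivity
      calc c ^ a * y ^ (σ*a) * (c ^ b * (x ^ σ - y ^ σ) ^ b)
          ≤ c ^ a * ((2:ℝ) ^ (-(σ*a)) * x ^ (σ*a)) * (c ^ b * (x ^ σ - y ^ σ) ^ b) := by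
            apply mul_le_mul_of_nonneg_right _ (by positivity)
            exact mul_le_mul_of_nonneg_left hB1 hca
        _ ≤ c ^ a * ((2:ℝ) ^ (-(σ*a)) * x ^ (σ*a)) *
              (c ^ b * (σ ^ b * x ^ (σ*b) * (j:ℝ) ^ (-b))) := by
            apply mul_le_mul_of_nonneg_left _ (by positivity)
            exact mul_le_mul_of_nonneg_left hDb hcb
    have hxM : (j:ℝ) = x * (M:ℝ) := by
      rw [hxdef]; field_simp
    have hjb : (j:ℝ) ^ (-b) = x ^ (-b) * (M:ℝ) ^ (-b) := by
      rw [hxM, Real.mul_rpow hx0.le hM0.le]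
    have hxe : x ^ (σ*a) * x ^ (σ*b) * x ^ (-b) = x ^ e := by
      rw [← Real.rpow_add hx0, ← Real.rpow_add hx0, hedef]
      congr 1
      ring
    have hxγ : x ^ e ≤ x ^ (γ - 1) := by
      have h : γ - 1 = min e 0 := by rw [hγdef]; ring
      rw [h]
      exact Real.rpow_le_rpow_of_exponent_ge hx0 hx1 (min_le_left e 0)
    calc (y ^ σ * c) ^ a * (x ^ σ * c - y ^ σ * c) ^ b
        ≤ (c ^ a * ((2:ℝ) ^ (-(σ*a)) * x ^ (σ*a))) *
            (c ^ b * (σ ^ b * x ^ (σ*b) * (j:ℝ) ^ (-b))) := hcomb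
      _ = K * (M:ℝ) ^ (-b) * (x ^ (σ*a) * x ^ (σ*b) * x ^ (-b)) := by
          rw [hjb, hKdef]; ring
      _ = K * (M:ℝ) ^ (-b) * x ^ e := by rw [hxe]
      _ ≤ K * (M:ℝ) ^ (-b) * x ^ (γ - 1) := by
          exact mul_le_mul_of_nonneg_left hxγ
            (mul_nonneg hK0.le (Real.rpow_nonneg hM0.le _))
  refine le_trans (Finset.sum_le_sum hterm) ?_
  have hγne : γ ≠ 0 := ne_of_gt hγ0
  have hMne : (M:ℝ) ≠ 0 := ne_of_gt hM0
  have hsum_le : (∑ j ∈ Finset.Icc 2 M, ((j:ℝ)/(M:ℝ)) ^ (γ - 1)) ≤ (M:ℝ) / γ := by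
    have h1 : ∀ j ∈ Finset.Icc 2 M,
        ((j:ℝ)/(M:ℝ)) ^ (γ - 1) = (j:ℝ) ^ (γ - 1) / (M:ℝ) ^ (γ - 1) := fun j _ =>
      Real.div_rpow (Nat.cast_nonneg j) hM0.le _
    rw [Finset.sum_congr rfl h1, ← Finset.sum_div,
      div_le_iff₀ (Real.rpow_pos_of_pos hM0 _)]
    have heq : (M:ℝ) / γ * (M:ℝ) ^ (γ - 1) = (M:ℝ) ^ γ / γ := by
      rw [Real.rpow_sub hM0, Real.rpow_one]
      field_simp
    rw [heq]
    exact aux_tele_sum hγ0 hγ1 M hM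
  have hnn : (0:ℝ) ≤ K * (M:ℝ) ^ (-b) :=
    mul_nonneg hK0.le (Real.rpow_nonneg hM0.le _)
  have hstep : (∑ j ∈ Finset.Icc 2 M, K * (M:ℝ) ^ (-b) * ((j:ℝ)/(M:ℝ)) ^ (γ - 1))
      ≤ K * (M:ℝ) ^ (-b) * ((M:ℝ) / γ) := by
    rw [← Finset.mul_sum]
    exact mul_le_mul_of_nonneg_left hsum_le hnn
  refine le_trans hstep (le_of_eq ?_)
  have hMb : (M:ℝ) ^ (α - 2) = (M:ℝ) ^ (-b) * (M:ℝ) := by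
    rw [show (α - 2 : ℝ) = -b + 1 from by rw [hbdef]; ring, Real.rpow_add hM0, Real.rpow_one]
  rw [hMb]
  ring
end

section
/- Let 0 < α < 1, 0 < r < 1 and set γ := αr + α. There exists a constant C depending only on α and r such that for every t₁ > 0, ∫₀^{t₁} ∫ₜ^{t₁} (s^γ − t^γ)² (s−t)^{−(1+α)} ds dt ≤ C t₁^{2αr+α+1}. -/
open MeasureTheory

/-- Subadditivity of `rpow` with exponent in `[0,1]`, difference form. -/
lemma rpow_sub_rpow_le {p t s : ℝ} (hp0 : 0 ≤ p) (hp1 : p ≤ 1) (ht : 0 ≤ t) (hts : t ≤ s) :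
    s ^ p - t ^ p ≤ (s - t) ^ p := by
  have hx : 0 ≤ s - t := sub_nonneg.2 hts
  have hs : 0 ≤ s := ht.trans hts
  have h := NNReal.rpow_add_le_add_rpow ((s - t).toNNReal) (t.toNNReal) hp0 hp1
  have h2 : (s - t).toNNReal + t.toNNReal = s.toNNReal := by
    rw [← Real.toNNReal_add hx ht, sub_add_cancel]
  rw [h2] at h
  have h3 := NNReal.coe_le_coe.2 h
  rw [NNReal.coe_rpow, NNReal.coe_add, NNReal.coe_rpow, NNReal.coe_rpow,
    Real.coe_toNNReal _ hs, Real.coe_toNNReal _ hx, Real.coe_toNNReal _ ht] at h3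
  linarith

/-- First-cell Gagliardo seminorm bound: with `γ = αr + α`,
`∫₀^{t₁} ∫ₜ^{t₁} (s^γ − t^γ)² (s−t)^{−(1+α)} ds dt ≤ C t₁^(2αr+α+1)`. -/
theorem first_cell_double_integral_estimate
    (α r : ℝ) (hα : 0 < α) (hα1 : α < 1) (hr : 0 < r) (hr1 : r < 1) :
    ∃ C > (0 : ℝ), ∀ t₁ : ℝ, 0 < t₁ →
      (∫ t in (0 : ℝ)..t₁, ∫ s in t..t₁,
          (s ^ (α * r + α) - t ^ (α * r + α)) ^ 2 * (s - t) ^ (-(1 + α)))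
        ≤ C * t₁ ^ (2 * α * r + α + 1) := by
  set γ : ℝ := α * r + α with hγdef
  have hγ0 : 0 < γ := by positivity
  have hγ2 : γ < 2 := by nlinarith
  have hαr : 0 < α * r := by positivity
  refine ⟨4 / (α * r), by positivity, ?_⟩
  intro t₁ ht₁
  set c : ℝ := 4 / (α * r) * t₁ ^ (2 * α * r + α) with hc
  have hcnn : 0 ≤ c := by positivity
  -- Inner bound: for every t ∈ Ioc 0 t₁, the inner integral is ≤ c.
  have inner_bound : ∀ t ∈ Set.Ioc (0 : ℝ) t₁,
      (∫ s in t..t₁, (s ^ γ - t ^ γ) ^ 2 * (s - t) ^ (-(1 + α))) ≤ c := by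
    intro t ht
    obtain ⟨ht0, ht1⟩ := ht
    rw [intervalIntegral.integral_of_le ht1]
    -- bounding function
    set g : ℝ → ℝ := fun s => 4 * t₁ ^ γ * (s - t) ^ (α * r - 1) with hg
    have hgint : IntervalIntegrable g volume t t₁ := by
      have h1 : IntervalIntegrable (fun x : ℝ => x ^ (α * r - 1)) volume 0 (t₁ - t) :=
        intervalIntegral.intervalIntegrable_rpow' (by linarith)
      have h2 := (h1.comp_sub_right t).const_mul (4 * t₁ ^ γ)
      simpa [hg] using h2
    have hgIO : IntegrableOn g (Set.Ioc t t₁) := by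
      have := hgint
      rw [intervalIntegrable_iff_integrableOn_Ioc_of_le ht1] at this
      exact this
    have hmono : (∫ s in Set.Ioc t t₁, (s ^ γ - t ^ γ) ^ 2 * (s - t) ^ (-(1 + α)))
        ≤ ∫ s in Set.Ioc t t₁, g s := by
      refine integral_mono_of_nonneg ?_ hgIO ?_
      · refine (ae_restrict_iff' measurableSet_Ioc).2 (ae_of_all _ fun s hs => ?_)
        have : (0:ℝ) ≤ s - t := by linarith [hs.1]
        positivity
      · refine (ae_restrict_iff' measurableSet_Ioc).2 (ae_of_all _ fun s hs => ?_)
        obtain ⟨hts, hst1⟩ := hs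
        have hst : 0 < s - t := by linarith
        have hs0 : 0 < s := lt_trans ht0 hts
        -- key pointwise estimate
        have key : s ^ γ - t ^ γ ≤ 2 * t₁ ^ (γ / 2) * (s - t) ^ (γ / 2) := by
          have hfac : s ^ γ - t ^ γ
              = (s ^ (γ / 2) + t ^ (γ / 2)) * (s ^ (γ / 2) - t ^ (γ / 2)) := by
            have e1 : s ^ (γ / 2) * s ^ (γ / 2) = s ^ γ := by
              rw [← Real.rpow_add hs0]; ring_nf
            have e2 : t ^ (γ / 2) * t ^ (γ / 2) = t ^ γ := by
              rw [← Real.rpow_add ht0]; ring_nf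
            rw [← e1, ← e2]; ring
          have hsub : s ^ (γ / 2) - t ^ (γ / 2) ≤ (s - t) ^ (γ / 2) :=
            rpow_sub_rpow_le (by positivity) (by linarith) ht0.le hts.le
          have hadd : s ^ (γ / 2) + t ^ (γ / 2) ≤ 2 * t₁ ^ (γ / 2) := by
            have h1 : s ^ (γ / 2) ≤ t₁ ^ (γ / 2) :=
              Real.rpow_le_rpow hs0.le hst1 (by positivity)
            have h2 : t ^ (γ / 2) ≤ t₁ ^ (γ / 2) :=
              Real.rpow_le_rpow ht0.le ht1 (by positivity)
            linarith
          have hsubnn : 0 ≤ s ^ (γ / 2) - t ^ (γ / 2) := by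
            have := Real.rpow_le_rpow ht0.le hts.le (by positivity : (0:ℝ) ≤ γ / 2)
            linarith
          have haddnn : 0 ≤ s ^ (γ / 2) + t ^ (γ / 2) := by positivity
          calc s ^ γ - t ^ γ = (s ^ (γ / 2) + t ^ (γ / 2)) * (s ^ (γ / 2) - t ^ (γ / 2)) := hfac
            _ ≤ (2 * t₁ ^ (γ / 2)) * ((s - t) ^ (γ / 2)) :=
                mul_le_mul hadd hsub hsubnn (by positivity)
            _ = 2 * t₁ ^ (γ / 2) * (s - t) ^ (γ / 2) := by ring
        have hnn : 0 ≤ s ^ γ - t ^ γ := by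
          have := Real.rpow_le_rpow ht0.le hts.le hγ0.le
          linarith
        have hsq : (s ^ γ - t ^ γ) ^ 2 ≤ 4 * t₁ ^ γ * (s - t) ^ γ := by
          have := pow_le_pow_left₀ hnn key 2
          calc (s ^ γ - t ^ γ) ^ 2 ≤ (2 * t₁ ^ (γ / 2) * (s - t) ^ (γ / 2)) ^ 2 := this
            _ = 4 * (t₁ ^ (γ / 2) * t₁ ^ (γ / 2)) * ((s - t) ^ (γ / 2) * (s - t) ^ (γ / 2)) := by
                ring
            _ = 4 * t₁ ^ γ * (s - t) ^ γ := by
                rw [← Real.rpow_add ht₁, ← Real.rpow_add hst]; ring_nf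
        calc (s ^ γ - t ^ γ) ^ 2 * (s - t) ^ (-(1 + α))
            ≤ (4 * t₁ ^ γ * (s - t) ^ γ) * (s - t) ^ (-(1 + α)) :=
              mul_le_mul_of_nonneg_right hsq (Real.rpow_nonneg hst.le _)
          _ = 4 * t₁ ^ γ * (s - t) ^ (α * r - 1) := by
              rw [mul_assoc, ← Real.rpow_add hst]
              congr 2
              rw [hγdef]; ring
          _ = g s := rfl
    -- compute the integral of g
    have hgval : (∫ s in Set.Ioc t t₁, g s) = 4 * t₁ ^ γ * ((t₁ - t) ^ (α * r) / (α * r)) := by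
      rw [← intervalIntegral.integral_of_le ht1]
      have : (∫ s in t..t₁, g s)
          = 4 * t₁ ^ γ * ∫ s in t..t₁, (s - t) ^ (α * r - 1) := by
        simp only [hg]
        rw [← intervalIntegral.integral_const_mul]
      rw [this, intervalIntegral.integral_comp_sub_right (fun x => x ^ (α * r - 1)) t,
        integral_rpow (Or.inl (by linarith))]
      rw [sub_self, Real.zero_rpow (by rw [sub_add_cancel]; exact hαr.ne')]
      ring_nf
    have hfin : 4 * t₁ ^ γ * ((t₁ - t) ^ (α * r) / (α * r)) ≤ c := by
      rw [hc]
      have h1 : (t₁ - t) ^ (α * r) ≤ t₁ ^ (α * r) :=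
        Real.rpow_le_rpow (by linarith) (by linarith) hαr.le
      have h2 : t₁ ^ γ * (t₁ - t) ^ (α * r) ≤ t₁ ^ γ * t₁ ^ (α * r) :=
        mul_le_mul_of_nonneg_left h1 (Real.rpow_nonneg ht₁.le _)
      have h3 : t₁ ^ γ * t₁ ^ (α * r) = t₁ ^ (2 * α * r + α) := by
        rw [← Real.rpow_add ht₁, hγdef]; ring_nf
      have h4 : 4 * t₁ ^ γ * ((t₁ - t) ^ (α * r) / (α * r))
          = 4 * (t₁ ^ γ * (t₁ - t) ^ (α * r)) / (α * r) := by ring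
      have h5 : 4 / (α * r) * t₁ ^ (2 * α * r + α)
          = 4 * t₁ ^ (2 * α * r + α) / (α * r) := by ring
      rw [h4, h5]
      have h6 : t₁ ^ γ * (t₁ - t) ^ (α * r) ≤ t₁ ^ (2 * α * r + α) := by
        rw [← h3]; exact h2
      gcongr
    calc (∫ s in Set.Ioc t t₁, (s ^ γ - t ^ γ) ^ 2 * (s - t) ^ (-(1 + α)))
        ≤ ∫ s in Set.Ioc t t₁, g s := hmono
      _ = 4 * t₁ ^ γ * ((t₁ - t) ^ (α * r) / (α * r)) := hgval
      _ ≤ c := hfin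
  -- Outer integral
  have inner_nonneg : ∀ t ∈ Set.Ioc (0 : ℝ) t₁,
      0 ≤ ∫ s in t..t₁, (s ^ γ - t ^ γ) ^ 2 * (s - t) ^ (-(1 + α)) := by
    intro t ht
    refine intervalIntegral.integral_nonneg ht.2 fun s hs => ?_
    have : (0:ℝ) ≤ s - t := by linarith [hs.1]
    positivity
  rw [intervalIntegral.integral_of_le ht₁.le]
  have houter : (∫ t in Set.Ioc (0:ℝ) t₁,
      ∫ s in t..t₁, (s ^ γ - t ^ γ) ^ 2 * (s - t) ^ (-(1 + α)))
      ≤ ∫ _t in Set.Ioc (0:ℝ) t₁, c := by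
    refine integral_mono_of_nonneg ?_ (integrableOn_const (by simp) (by simp)) ?_
    · exact (ae_restrict_iff' measurableSet_Ioc).2 (ae_of_all _ inner_nonneg)
    · exact (ae_restrict_iff' measurableSet_Ioc).2 (ae_of_all _ inner_bound)
  have hconst : (∫ _t in Set.Ioc (0:ℝ) t₁, c) = c * t₁ := by
    rw [setIntegral_const, Real.volume_real_Ioc_of_le ht₁.le, smul_eq_mul, sub_zero,
      mul_comm]
  have hfinal : c * t₁ = 4 / (α * r) * t₁ ^ (2 * α * r + α + 1) := by
    rw [hc, mul_assoc, ← Real.rpow_add_one ht₁.ne']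
  calc (∫ t in Set.Ioc (0:ℝ) t₁,
        ∫ s in t..t₁, (s ^ γ - t ^ γ) ^ 2 * (s - t) ^ (-(1 + α))) ≤ _ := houter
    _ = c * t₁ := hconst
    _ = 4 / (α * r) * t₁ ^ (2 * α * r + α + 1) := hfinal
end
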